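/- There exist p.f.d. rectangle decomposable ℝ²-persistence modules M and N with d_I(M,N) = 1 and d_B(M,N) = 3; in particular the bound d_B ≤ (2n−1)d_I for rectangle decomposable ℝ^n-modules is tight for n = 2. Concretely, B(M) = {(0,10)×(1,11), (0,12)×(−1,11), (2,10)×(1,9)} and B(N) = {(1,11)×(0,10), (1,9)×(0,12), (−1,11)×(2,10)} give 1-interleaved modules admitting no ε-matching for ε < 3. -/

import Mathlib

open CategoryTheory Classical

noncomputable section

/-- Convexity of a subset of a poset. -/
def IsConvex {P : Type} [Preorder P] (I : Set P) : Prop :=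
  ∀ ⦃p q r : P⦄, p ∈ I → q ∈ I → p ≤ r → r ≤ q → r ∈ I

/-- Zigzag connectivity within a subset. -/
def ZigzagConnected {P : Type} [Preorder P] (I : Set P) : Prop :=
  ∀ p ∈ I, ∀ q ∈ I,
    Relation.ReflTransGen (fun a b => a ∈ I ∧ b ∈ I ∧ (a ≤ b ∨ b ≤ a)) p q

/-- An interval in a poset: nonempty, convex, and zigzag connected. -/
def IsIntervalSet {P : Type} [Preorder P] (I : Set P) : Prop :=
  I.Nonempty ∧ IsConvex I ∧ ZigzagConnected I

open scoped Classical in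
/-- The pointwise vector space of the interval module: `k` (as `⊤`) on `I`, `0` off `I`. -/
def objSub (k : Type) [Field k] {P : Type} [Preorder P] (I : Set P) (p : P) : Submodule k k :=
  if p ∈ I then ⊤ else ⊥

open scoped Classical in
/-- The interval persistence module `𝕀^I` as a functor `P ⥤ ModuleCat k`. -/
def intervalModule (k : Type) [Field k] {P : Type} [Preorder P] (I : Set P)
    (hI : IsConvex I) : P ⥤ ModuleCat.{0} k where
  obj p := ModuleCat.of k (objSub k I p)
  map {p q} h :=
    if hpq : p ∈ I ∧ q ∈ I then
      ModuleCat.ofHom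
        { toFun := fun x => ⟨(x : k), by simp [objSub, hpq.2]⟩
          map_add' := by intros; rfl
          map_smul' := by intros; rfl }
    else 0
  map_id := by
    intro p
    try dsimp only
    by_cases hp : p ∈ I
    · rw [dif_pos ⟨hp, hp⟩]; rfl
    · rw [dif_neg (fun h => hp h.1)]
      haveI : Subsingleton ↥(objSub k I p) := by
        rw [objSub, if_neg hp]; infer_instance
      apply ModuleCat.hom_ext; apply LinearMap.ext; intro x
      exact this.allEq _ _
  map_comp := by
    intro p q r hpq hqr
    try dsimp only
    by_cases hpr : p ∈ I ∧ r ∈ I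
    · have hq : q ∈ I := hI hpr.1 hpr.2 (leOfHom hpq) (leOfHom hqr)
      rw [dif_pos hpr, dif_pos ⟨hpr.1, hq⟩, dif_pos ⟨hq, hpr.2⟩]
      rfl
    · rw [dif_neg hpr]
      by_cases hp : p ∈ I
      · have hr : r ∉ I := fun hr => hpr ⟨hp, hr⟩
        haveI : Subsingleton ↥(objSub k I r) := by
          rw [objSub, if_neg hr]; infer_instance
        apply ModuleCat.hom_ext; apply LinearMap.ext; intro x
        exact this.allEq _ _
      · haveI : Subsingleton ↥(objSub k I p) := by
          rw [objSub, if_neg hp]; infer_instance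
        apply ModuleCat.hom_ext; apply LinearMap.ext; intro x
        have hx : x = 0 := this.allEq x 0
        rw [hx]
        simp

open DirectSum

open scoped ENNReal

/-- Direct sum of a family of persistence modules. -/
def dsumF (k : Type) [Field k] {P : Type} [Preorder P] {ι : Type}
    (F : ι → P ⥤ ModuleCat.{0} k) : P ⥤ ModuleCat.{0} k where
  obj p := ModuleCat.of k (⨁ i, ((F i).obj p : Type))
  map {p q} h := ModuleCat.ofHom
    (DFinsupp.mapRange.linearMap (fun i => ((F i).map h).hom))
  map_id := by
    intro p
    try dsimp only
    simp only [CategoryTheory.Functor.map_id]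
    apply ModuleCat.hom_ext; apply LinearMap.ext; intro x
    apply DFinsupp.ext; intro i
    rfl
  map_comp := by
    intro p q r hpq hqr
    try dsimp only
    simp only [CategoryTheory.Functor.map_comp]
    apply ModuleCat.hom_ext; apply LinearMap.ext; intro x
    apply DFinsupp.ext; intro i
    rfl

/-- Use the preorder category structure on `Fin n → ℝ`. -/
instance RnCat (n : ℕ) : Category (Fin n → ℝ) := Preorder.smallCategory _

/-- Diagonal translation by `ε` as an endofunctor of the poset `Fin n → ℝ`. -/
def transl (n : ℕ) (ε : ℝ) : (Fin n → ℝ) ⥤ (Fin n → ℝ) :=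
  Monotone.functor (f := fun p i => p i + ε)
    (fun _ _ hab i => by show _ + ε ≤ _ + ε; linarith [hab i])

/-- `M` and `N` are `ε`-interleaved `ℝⁿ`-persistence modules. -/
def Interleaved (k : Type) [Field k] {n : ℕ} (ε : ℝ)
    (M N : (Fin n → ℝ) ⥤ ModuleCat.{0} k) : Prop :=
  ∃ _hε : 0 ≤ ε, ∃ (f : M ⟶ transl n ε ⋙ N) (g : N ⟶ transl n ε ⋙ M),
    (∀ p : Fin n → ℝ, f.app p ≫ g.app (fun i => p i + ε) =
      M.map (homOfLE (show p ≤ fun i => p i + ε + ε from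
        fun i => by show p i ≤ p i + ε + ε; linarith))) ∧
    (∀ p : Fin n → ℝ, g.app p ≫ f.app (fun i => p i + ε) =
      N.map (homOfLE (show p ≤ fun i => p i + ε + ε from
        fun i => by show p i ≤ p i + ε + ε; linarith)))

/-- An interval `I ⊆ ℝⁿ` is `δ`-trivial: it contains no pair `p ≤ p + δ`. -/
def SetTrivial {n : ℕ} (δ : ℝ) (I : Set (Fin n → ℝ)) : Prop :=
  ¬ ∃ p, p ∈ I ∧ (fun i => p i + δ) ∈ I

/-- Barcode data: an indexed family of nonempty convex intervals in `ℝⁿ`. -/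
structure Barcode (n : ℕ) where
  ι : Type
  I : ι → Set (Fin n → ℝ)
  nonempty : ∀ i, (I i).Nonempty
  conv : ∀ i, IsConvex (I i)

/-- The interval decomposable module associated to barcode data. -/
def Barcode.module (k : Type) [Field k] {n : ℕ} (B : Barcode n) :
    (Fin n → ℝ) ⥤ ModuleCat.{0} k :=
  dsumF k fun i => intervalModule k (B.I i) (B.conv i)

/-- `B` is pointwise finite dimensional. -/
def Barcode.pfd (k : Type) [Field k] {n : ℕ} (B : Barcode n) : Prop :=
  ∀ p : Fin n → ℝ, Module.Finite k ((B.module k).obj p)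

/-- An `ε`-matching between two barcodes: a partial bijection such that unmatched
intervals are `2ε`-trivial and matched intervals are `ε`-interleaved. -/
def Matched (k : Type) [Field k] {n : ℕ} (ε : ℝ) (B C : Barcode n) : Prop :=
  0 ≤ ε ∧ ∃ (A : Set B.ι) (A' : Set C.ι) (e : A ≃ A'),
    (∀ i ∉ A, SetTrivial (2 * ε) (B.I i)) ∧
    (∀ j ∉ A', SetTrivial (2 * ε) (C.I j)) ∧
    (∀ i : A, Interleaved k ε
      (intervalModule k (B.I i) (B.conv i))
      (intervalModule k (C.I (e i)) (C.conv (e i))))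

/-- The interleaving distance, valued in `ℝ≥0∞`. -/
def dInt (k : Type) [Field k] {n : ℕ} (M N : (Fin n → ℝ) ⥤ ModuleCat.{0} k) : ℝ≥0∞ :=
  ⨅ (ε : ℝ) (_ : Interleaved k ε M N), ENNReal.ofReal ε

/-- The bottleneck distance between barcodes, valued in `ℝ≥0∞`. -/
def dBot (k : Type) [Field k] {n : ℕ} (B C : Barcode n) : ℝ≥0∞ :=
  ⨅ (ε : ℝ) (_ : Matched k ε B C), ENNReal.ofReal ε

/-- Rectangles: products of real intervals. -/
def rectSet {n : ℕ} (R : Fin n → Set ℝ) : Set (Fin n → ℝ) := {x | ∀ i, x i ∈ R i}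

theorem rectSet_convex {n : ℕ} (R : Fin n → Set ℝ) (h : ∀ i, (R i).OrdConnected) :
    IsConvex (rectSet R) := by
  intro p q r hp hq hpr hrq i
  exact (h i).out (hp i) (hq i) ⟨hpr i, hrq i⟩

/-- A barcode consists of rectangles. -/
def IsRectBarcode {n : ℕ} (B : Barcode n) : Prop :=
  ∀ i, ∃ R : Fin n → Set ℝ,
    (∀ j, (R j).Nonempty ∧ (R j).OrdConnected) ∧ B.I i = rectSet R

/-- The open rectangle `(a,b) × (c,d) ⊆ ℝ²`. -/
def rect2 (a b c d : ℝ) : Set (Fin 2 → ℝ) := rectSet ![Set.Ioo a b, Set.Ioo c d]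

theorem rect2_conv (a b c d : ℝ) : IsConvex (rect2 a b c d) := by
  apply rectSet_convex
  intro j
  fin_cases j
  · simpa using Set.ordConnected_Ioo
  · simpa using Set.ordConnected_Ioo

theorem rect2_nonempty {a b c d : ℝ} (h1 : a < b) (h2 : c < d) :
    (rect2 a b c d).Nonempty := by
  refine ⟨![(a + b) / 2, (c + d) / 2], fun i => ?_⟩
  fin_cases i
  · simp only [rect2, rectSet]
    constructor <;> (simp; linarith)
  · simp only [rect2, rectSet]
    constructor <;> (simp; linarith)

/-- The barcode `{(0,10)×(1,11), (0,12)×(−1,11), (2,10)×(1,9)}`. -/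
def B16 : Barcode 2 where
  ι := Fin 3
  I := ![rect2 0 10 1 11, rect2 0 12 (-1) 11, rect2 2 10 1 9]
  nonempty := by
    intro i
    fin_cases i
    · exact rect2_nonempty (by norm_num) (by norm_num)
    · exact rect2_nonempty (by norm_num) (by norm_num)
    · exact rect2_nonempty (by norm_num) (by norm_num)
  conv := by
    intro i
    fin_cases i
    · exact rect2_conv _ _ _ _
    · exact rect2_conv _ _ _ _
    · exact rect2_conv _ _ _ _

/-- The barcode `{(1,11)×(0,10), (1,9)×(0,12), (−1,11)×(2,10)}`. -/
def N16 : Barcode 2 where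
  ι := Fin 3
  I := ![rect2 1 11 0 10, rect2 1 9 0 12, rect2 (-1) 11 2 10]
  nonempty := by
    intro i
    fin_cases i
    · exact rect2_nonempty (by norm_num) (by norm_num)
    · exact rect2_nonempty (by norm_num) (by norm_num)
    · exact rect2_nonempty (by norm_num) (by norm_num)
  conv := by
    intro i
    fin_cases i
    · exact rect2_conv _ _ _ _
    · exact rect2_conv _ _ _ _
    · exact rect2_conv _ _ _ _

/-! ### Auxiliary machinery -/

open scoped Classical

section Aux

variable (k : Type) [Field k]

lemma mem_rect2 {a b c d : ℝ} {p : Fin 2 → ℝ} :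
    p ∈ rect2 a b c d ↔ a < p 0 ∧ p 0 < b ∧ c < p 1 ∧ p 1 < d := by
  constructor
  · intro h
    have h0 := h 0; have h1 := h 1
    simp only [Matrix.cons_val_zero, Matrix.cons_val_one, Matrix.head_cons,
      Set.mem_Ioo] at h0 h1
    exact ⟨h0.1, h0.2, h1.1, h1.2⟩
  · rintro ⟨h1, h2, h3, h4⟩ i
    fin_cases i <;>
      simp only [Matrix.cons_val_zero, Matrix.cons_val_one, Matrix.head_cons, Set.mem_Ioo]
    · exact ⟨h1, h2⟩
    · exact ⟨h3, h4⟩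

lemma objSub_subsingleton {P : Type} [Preorder P] {I : Set P} {p : P} (hp : p ∉ I) :
    Subsingleton (objSub k I p) := by
  rw [objSub, if_neg hp]; infer_instance

/-- The basic two-point component map between interval module fibers. -/
def jmap (c : k) {P : Type} [Preorder P] (I K : Set P) (p r : P) :
    objSub k I p →ₗ[k] objSub k K r :=
  if h : p ∈ I ∧ r ∈ K then
    c • { toFun := fun x => ⟨(x : k), by simp [objSub, h.2]⟩
          map_add' := by intros; rfl
          map_smul' := by intros; rfl }
  else 0

lemma jmap_zero {P : Type} [Preorder P] (I K : Set P) (p r : P) :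
    jmap k 0 I K p r = 0 := by
  rw [jmap]; split
  · simp
  · rfl

lemma jmap_of_not {P : Type} [Preorder P] {I K : Set P} {p r : P} (c : k)
    (h : ¬(p ∈ I ∧ r ∈ K)) : jmap k c I K p r = 0 := dif_neg h

lemma jmap_add {P : Type} [Preorder P] (c c' : k) (I K : Set P) (p r : P) :
    jmap k c I K p r + jmap k c' I K p r = jmap k (c + c') I K p r := by
  rw [jmap, jmap, jmap]; split
  · rw [← add_smul]
  · simp

/-- `jmap` as an additive hom in the scalar. -/
def jmapHom {P : Type} [Preorder P] (I K : Set P) (p r : P) :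
    k →+ (objSub k I p →ₗ[k] objSub k K r) where
  toFun c := jmap k c I K p r
  map_zero' := jmap_zero k I K p r
  map_add' c c' := (jmap_add k c c' I K p r).symm

lemma jmap_comp {P : Type} [Preorder P] (c c' : k) (I J K : Set P) (p q r : P) :
    (jmap k c' J K q r).comp (jmap k c I J p q) =
      if q ∈ J then jmap k (c * c') I K p r else 0 := by
  by_cases hq : q ∈ J
  · rw [if_pos hq]
    by_cases hp : p ∈ I
    · by_cases hr : r ∈ K
      · simp only [jmap]
        rw [dif_pos ⟨hq, hr⟩, dif_pos ⟨hp, hq⟩, dif_pos ⟨hp, hr⟩]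
        apply LinearMap.ext; intro x
        apply Subtype.ext
        show c' * (c * (x : k)) = (c * c') * (x : k)
        ring
      · rw [jmap_of_not k c' (fun h => hr h.2), jmap_of_not k (c * c') (fun h => hr h.2),
          LinearMap.zero_comp]
    · rw [jmap_of_not k c (fun h => hp h.1), jmap_of_not k (c * c') (fun h => hp h.1),
        LinearMap.comp_zero]
  · rw [if_neg hq, jmap_of_not k c (fun h => hq h.2), LinearMap.comp_zero]

lemma intervalModule_map_eq {P : Type} [Preorder P] (I : Set P) (hI : IsConvex I)
    {p q : P} (h : p ⟶ q) :
    (intervalModule k I hI).map h = ModuleCat.ofHom (jmap k 1 I I p q) := by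
  by_cases hpq : p ∈ I ∧ q ∈ I
  · show (if hpq : p ∈ I ∧ q ∈ I then _ else 0) = _
    exact (dif_pos hpq).trans (by rw [jmap, dif_pos hpq, one_smul])
  · show (if hpq : p ∈ I ∧ q ∈ I then _ else 0) = _
    exact (dif_neg hpq).trans (by rw [jmap, dif_neg hpq]; apply ModuleCat.hom_ext; rfl)

lemma jmap_nat {P : Type} [Preorder P] (I J : Set P) (w : k) (p q p' q' : P)
    (hcond : w = 0 ∨
      ((p ∈ I → q ∈ I → q' ∈ J → p' ∈ J) ∧ (p ∈ I → q' ∈ J → q ∈ I))) :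
    (jmap k w I J q q').comp (jmap k 1 I I p q) =
      (jmap k 1 J J p' q').comp (jmap k w I J p p') := by
  rw [jmap_comp, jmap_comp, one_mul, mul_one]
  rcases hcond with hw | ⟨hL, hU⟩
  · subst hw
    rw [jmap_zero]
    split <;> split <;> rfl
  · by_cases hq : q ∈ I <;> by_cases hp' : p' ∈ J
    · rw [if_pos hq, if_pos hp']
    · rw [if_pos hq, if_neg hp']
      exact jmap_of_not k w (fun h => hp' (hL h.1 hq h.2))
    · rw [if_neg hq, if_pos hp']
      exact (jmap_of_not k w (fun h => hq (hU h.1 h.2))).symm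
    · rw [if_neg hq, if_neg hp']

/-- Symmetry of interleaving. -/
lemma interleaved_symm {n : ℕ} {ε : ℝ} {M N : (Fin n → ℝ) ⥤ ModuleCat.{0} k}
    (h : Interleaved k ε M N) : Interleaved k ε N M := by
  obtain ⟨hε, f, g, hfg, hgf⟩ := h
  exact ⟨hε, g, f, hgf, hfg⟩

/-- Key obstruction: if `p, p+2ε ∈ I` but `p+ε ∉ J`, the interval modules are
not `ε`-interleaved. -/
lemma not_interleaved_interval {n : ℕ} {I J : Set (Fin n → ℝ)}
    {hI : IsConvex I} {hJ : IsConvex J} {ε : ℝ} (p : Fin n → ℝ)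
    (hp : p ∈ I) (hp2 : (fun l => p l + ε + ε) ∈ I) (hq : (fun l => p l + ε) ∉ J) :
    ¬ Interleaved k ε (intervalModule k I hI) (intervalModule k J hJ) := by
  rintro ⟨hε, f, g, hfg, -⟩
  have hcomp := hfg p
  set x : objSub k I p := ⟨1, by simp [objSub, hp]⟩ with hxdef
  have h1 : (g.app (fun i => p i + ε)) ((f.app p) x) =
      ((intervalModule k I hI).map (homOfLE (show p ≤ fun i => p i + ε + ε from
        fun i => by show p i ≤ p i + ε + ε; linarith))) x := by
    rw [← hcomp]; rfl
  have h2 : (f.app p) x = 0 := (objSub_subsingleton k hq).allEq _ _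
  rw [h2, intervalModule_map_eq] at h1
  have h4 : (((jmap k 1 I I p (fun i => p i + ε + ε)) x) : k) = 1 := by
    rw [jmap, dif_pos ⟨hp, hp2⟩]
    simp [hxdef]
  have h7 : (0 : objSub k I (fun i => p i + ε + ε)) =
      (jmap k 1 I I p (fun i => p i + ε + ε)) x := (map_zero _).symm.trans h1
  rw [← h7] at h4
  simp only [ZeroMemClass.coe_zero] at h4
  exact zero_ne_one h4

/-- Construction: interleaving of two rectangle interval modules. -/
lemma rect2_interleaved {a b c d a' b' c' d' ε : ℝ} (hε : 0 ≤ ε)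
    (h1 : a' ≤ a + ε) (h2 : c' ≤ c + ε) (h3 : b' ≤ b + ε) (h4 : d' ≤ d + ε)
    (h5 : a ≤ a' + ε) (h6 : c ≤ c' + ε) (h7 : b ≤ b' + ε) (h8 : d ≤ d' + ε)
    (hI : IsConvex (rect2 a b c d)) (hJ : IsConvex (rect2 a' b' c' d')) :
    Interleaved k ε (intervalModule k (rect2 a b c d) hI)
      (intervalModule k (rect2 a' b' c' d') hJ) := by
  set I := rect2 a b c d with hIdef
  set J := rect2 a' b' c' d' with hJdef
  have condIJ : ∀ p q : Fin 2 → ℝ, p ≤ q →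
      ((p ∈ I → q ∈ I → (fun l => q l + ε) ∈ J → (fun l => p l + ε) ∈ J) ∧
       (p ∈ I → (fun l => q l + ε) ∈ J → q ∈ I)) := by
    intro p q hpq
    have e0 := hpq 0; have e1 := hpq 1
    constructor
    · rintro hp hq hr
      rw [mem_rect2] at hp hq hr ⊢
      exact ⟨by linarith, by linarith, by linarith, by linarith⟩
    · rintro hp hr
      rw [mem_rect2] at hp hr ⊢
      exact ⟨by linarith, by linarith, by linarith, by linarith⟩
  have condJI : ∀ p q : Fin 2 → ℝ, p ≤ q →
      ((p ∈ J → q ∈ J → (fun l => q l + ε) ∈ I → (fun l => p l + ε) ∈ I) ∧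
       (p ∈ J → (fun l => q l + ε) ∈ I → q ∈ J)) := by
    intro p q hpq
    have e0 := hpq 0; have e1 := hpq 1
    constructor
    · rintro hp hq hr
      rw [mem_rect2] at hp hq hr ⊢
      exact ⟨by linarith, by linarith, by linarith, by linarith⟩
    · rintro hp hr
      rw [mem_rect2] at hp hr ⊢
      exact ⟨by linarith, by linarith, by linarith, by linarith⟩
  refine ⟨hε, ?_, ?_, ?_, ?_⟩
  · exact
      { app := fun p => ModuleCat.ofHom (jmap k 1 I J p (fun l => p l + ε))
        naturality := by
          intro p q h
          show _ = _
          rw [intervalModule_map_eq]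
          have : (transl 2 ε ⋙ intervalModule k J hJ).map h =
              ModuleCat.ofHom (jmap k 1 J J (fun l => p l + ε) (fun l => q l + ε)) :=
            intervalModule_map_eq k J hJ ((transl 2 ε).map h)
          rw [this]
          apply ModuleCat.hom_ext
          exact jmap_nat k I J 1 p q _ _ (Or.inr (condIJ p q (leOfHom h))) }
  · exact
      { app := fun p => ModuleCat.ofHom (jmap k 1 J I p (fun l => p l + ε))
        naturality := by
          intro p q h
          show _ = _
          rw [intervalModule_map_eq]
          have : (transl 2 ε ⋙ intervalModule k I hI).map h =
              ModuleCat.ofHom (jmap k 1 I I (fun l => p l + ε) (fun l => q l + ε)) :=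
            intervalModule_map_eq k I hI ((transl 2 ε).map h)
          rw [this]
          apply ModuleCat.hom_ext
          exact jmap_nat k J I 1 p q _ _ (Or.inr (condJI p q (leOfHom h))) }
  · intro p
    apply ModuleCat.hom_ext
    show (jmap k 1 J I (fun l => p l + ε) (fun i => p i + ε + ε)).comp
        (jmap k 1 I J p (fun l => p l + ε)) = _
    rw [intervalModule_map_eq, jmap_comp, one_mul]
    by_cases hm : (fun l => p l + ε) ∈ J
    · rw [if_pos hm]; rfl
    · rw [if_neg hm]
      show (0 : _ →ₗ[k] _) = jmap k 1 I I p (fun i => p i + ε + ε)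
      refine (jmap_of_not k 1 ?_).symm
      rintro ⟨hp, hp2⟩
      apply hm
      rw [mem_rect2] at hp hp2 ⊢
      exact ⟨by linarith, by linarith, by linarith, by linarith⟩
  · intro p
    apply ModuleCat.hom_ext
    show (jmap k 1 I J (fun l => p l + ε) (fun i => p i + ε + ε)).comp
        (jmap k 1 J I p (fun l => p l + ε)) = _
    rw [intervalModule_map_eq, jmap_comp, one_mul]
    by_cases hm : (fun l => p l + ε) ∈ I
    · rw [if_pos hm]; rfl
    · rw [if_neg hm]
      show (0 : _ →ₗ[k] _) = jmap k 1 J J p (fun i => p i + ε + ε)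
      refine (jmap_of_not k 1 ?_).symm
      rintro ⟨hp, hp2⟩
      apply hm
      rw [mem_rect2] at hp hp2 ⊢
      exact ⟨by linarith, by linarith, by linarith, by linarith⟩

lemma mapRange_lof {ι : Type} [DecidableEq ι] {M N : ι → Type}
    [∀ i, AddCommMonoid (M i)] [∀ i, Module k (M i)]
    [∀ i, AddCommMonoid (N i)] [∀ i, Module k (N i)]
    (f : ∀ i, M i →ₗ[k] N i) (i : ι) (x : M i) :
    DFinsupp.mapRange.linearMap f (DirectSum.lof k ι M i x) =
      DirectSum.lof k ι N i (f i x) := by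
  rw [DFinsupp.mapRange.linearMap_apply, ← DirectSum.single_eq_lof k i x,
    DFinsupp.mapRange_single, DirectSum.single_eq_lof k]

lemma dsum_subsingleton {ι : Type} {M : ι → Type} [∀ i, AddCommMonoid (M i)]
    [∀ i, Subsingleton (M i)] : Subsingleton (⨁ i, M i) := by
  constructor
  intro a b
  apply DFinsupp.ext
  intro i
  exact Subsingleton.elim _ _

lemma if_jmap {P : Type} [Preorder P] (c : Prop) [Decidable c] (w : k) (I K : Set P)
    (p r : P) :
    (if c then jmap k w I K p r else 0) = jmap k (if c then w else 0) I K p r := by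
  split_ifs
  · rfl
  · rw [jmap_zero]

lemma jmap_sum {P : Type} [Preorder P] {ι : Type} (s : Finset ι) (c : ι → k)
    (I K : Set P) (p r : P) :
    ∑ j ∈ s, jmap k (c j) I K p r = jmap k (∑ j ∈ s, c j) I K p r :=
  (map_sum (jmapHom k I K p r) c s).symm

/-- The matrix-of-scalars morphism between direct sums of interval modules. -/
def matApp {ι : Type} [Fintype ι] [DecidableEq ι] (W : ι → ι → k)
    (I J : ι → Set (Fin 2 → ℝ)) (ε : ℝ) (p : Fin 2 → ℝ) :
    (⨁ i, ↥(objSub k (I i) p)) →ₗ[k] ⨁ j, ↥(objSub k (J j) (fun l => p l + ε)) :=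
  DirectSum.toModule k ι _ fun i =>
    ∑ j, (DirectSum.lof k ι (fun j => ↥(objSub k (J j) (fun l => p l + ε))) j).comp
      (jmap k (W i j) (I i) (J j) p (fun l => p l + ε))

lemma matApp_lof {ι : Type} [Fintype ι] [DecidableEq ι] (W : ι → ι → k)
    (I J : ι → Set (Fin 2 → ℝ)) (ε : ℝ) (p : Fin 2 → ℝ) (i : ι) (x : objSub k (I i) p) :
    matApp k W I J ε p (DirectSum.lof k ι _ i x) =
      ∑ j, DirectSum.lof k ι (fun j => ↥(objSub k (J j) (fun l => p l + ε))) j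
        (jmap k (W i j) (I i) (J j) p (fun l => p l + ε) x) := by
  rw [matApp, DirectSum.toModule_lof]
  rw [LinearMap.sum_apply]
  simp only [LinearMap.comp_apply]

lemma matApp_nat {ι : Type} [Fintype ι] [DecidableEq ι] (W : ι → ι → k)
    (I J : ι → Set (Fin 2 → ℝ)) (ε : ℝ) (p q : Fin 2 → ℝ)
    (hcond : ∀ i j, W i j = 0 ∨
      ((p ∈ I i → q ∈ I i → (fun l => q l + ε) ∈ J j → (fun l => p l + ε) ∈ J j) ∧
       (p ∈ I i → (fun l => q l + ε) ∈ J j → q ∈ I i))) :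
    (matApp k W I J ε q).comp
        (DFinsupp.mapRange.linearMap fun i => jmap k 1 (I i) (I i) p q) =
      (DFinsupp.mapRange.linearMap fun j =>
          jmap k 1 (J j) (J j) (fun l => p l + ε) (fun l => q l + ε)).comp
        (matApp k W I J ε p) := by
  apply DirectSum.linearMap_ext
  intro i
  apply LinearMap.ext
  intro x
  simp only [LinearMap.comp_apply]
  erw [mapRange_lof, matApp_lof]
  erw [matApp_lof, map_sum]
  refine Finset.sum_congr rfl fun j _ => ?_
  erw [mapRange_lof]
  congr 1
  exact LinearMap.congr_fun (jmap_nat k (I i) (J j) (W i j) p q _ _ (hcond i j)) x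

lemma matApp_comp {ι : Type} [Fintype ι] [DecidableEq ι] (W W' : ι → ι → k)
    (I J : ι → Set (Fin 2 → ℝ)) (ε : ℝ) (p : Fin 2 → ℝ)
    (hscal : ∀ i i', p ∈ I i → (fun l => p l + ε + ε) ∈ I i' →
      (∑ j, if (fun l => p l + ε) ∈ J j then W i j * W' j i' else 0) =
        if i = i' then 1 else 0) :
    (matApp k W' J I ε (fun l => p l + ε)).comp (matApp k W I J ε p) =
      DFinsupp.mapRange.linearMap
        (fun i => jmap k 1 (I i) (I i) p (fun l => p l + ε + ε)) := by
  classical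
  apply DirectSum.linearMap_ext
  intro i
  apply LinearMap.ext
  intro x
  simp only [LinearMap.comp_apply]
  erw [matApp_lof, map_sum, mapRange_lof]
  have step1 : ∀ j : ι,
      (matApp k W' J I ε (fun l => p l + ε))
        (DirectSum.lof k ι _ j (jmap k (W i j) (I i) (J j) p (fun l => p l + ε) x)) =
      ∑ i', DirectSum.lof k ι (fun i' => ↥(objSub k (I i') (fun l => p l + ε + ε))) i'
        ((jmap k (W' j i') (J j) (I i') (fun l => p l + ε) (fun l => p l + ε + ε)).comp
          (jmap k (W i j) (I i) (J j) p (fun l => p l + ε)) x) :=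
    fun j => matApp_lof k W' J I ε (fun l => p l + ε) j _
  rw [Finset.sum_congr rfl fun j _ => step1 j]
  rw [Finset.sum_comm]
  have step2 : ∀ i' : ι,
      (∑ j, DirectSum.lof k ι (fun i' => ↥(objSub k (I i') (fun l => p l + ε + ε))) i'
        ((jmap k (W' j i') (J j) (I i') (fun l => p l + ε) (fun l => p l + ε + ε)).comp
          (jmap k (W i j) (I i) (J j) p (fun l => p l + ε)) x)) =
      DirectSum.lof k ι (fun i' => ↥(objSub k (I i') (fun l => p l + ε + ε))) i'
        (jmap k (∑ j, if (fun l => p l + ε) ∈ J j then W i j * W' j i' else 0)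
          (I i) (I i') p (fun l => p l + ε + ε) x) := by
    intro i'
    rw [← map_sum]
    congr 1
    rw [← jmap_sum, ← LinearMap.sum_apply]
    congr 1
    refine Finset.sum_congr rfl fun j _ => ?_
    rw [jmap_comp, if_jmap]
  rw [Finset.sum_congr rfl fun i' _ => step2 i']
  have key : ∀ i' : ι, i' ∈ Finset.univ →
      DirectSum.lof k ι (fun i' => ↥(objSub k (I i') (fun l => p l + ε + ε))) i'
        (jmap k (∑ j, if (fun l => p l + ε) ∈ J j then W i j * W' j i' else 0)
          (I i) (I i') p (fun l => p l + ε + ε) x) =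
      if i' = i then
        DirectSum.lof k ι (fun i' => ↥(objSub k (I i') (fun l => p l + ε + ε))) i
          (jmap k 1 (I i) (I i) p (fun l => p l + ε + ε) x)
      else 0 := by
    intro i' _
    by_cases hm : p ∈ I i ∧ (fun l => p l + ε + ε) ∈ I i'
    · rw [hscal i i' hm.1 hm.2]
      by_cases hii : i' = i
      · subst hii
        rw [if_pos rfl, if_pos rfl]
      · rw [if_neg (fun h => hii h.symm), if_neg hii, jmap_zero, LinearMap.zero_apply,
          map_zero]
    · rw [jmap_of_not k _ hm, LinearMap.zero_apply, map_zero]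
      by_cases hii : i' = i
      · subst hii
        rw [if_pos rfl, jmap_of_not k _ hm, LinearMap.zero_apply, map_zero]
      · rw [if_neg hii]
  rw [Finset.sum_congr rfl key, Finset.sum_ite_eq' Finset.univ i, if_pos (Finset.mem_univ i)]


lemma fin3_cases (x : Fin 3) : x = 0 ∨ x = 1 ∨ x = 2 := by omega

def Wf : Fin 3 → Fin 3 → k := ![![1,1,1],![1,1,0],![1,0,1]]

def Wg : Fin 3 → Fin 3 → k := ![![-1,1,1],![1,0,-1],![1,-1,0]]

def II : Fin 3 → Set (Fin 2 → ℝ) := ![rect2 0 10 1 11, rect2 0 12 (-1) 11, rect2 2 10 1 9]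

def JJ : Fin 3 → Set (Fin 2 → ℝ) :=
  ![rect2 1 11 0 10, rect2 1 9 0 12, rect2 (-1) 11 2 10]

lemma rect_LU {a b c d a' b' c' d' ε : ℝ}
    (h1 : a' ≤ a + ε) (h2 : c' ≤ c + ε) (h3 : b' ≤ b + ε) (h4 : d' ≤ d + ε)
    (p q : Fin 2 → ℝ) (hpq : p ≤ q) :
    (p ∈ rect2 a b c d → q ∈ rect2 a b c d → (fun l => q l + ε) ∈ rect2 a' b' c' d' →
      (fun l => p l + ε) ∈ rect2 a' b' c' d') ∧
    (p ∈ rect2 a b c d → (fun l => q l + ε) ∈ rect2 a' b' c' d' → q ∈ rect2 a b c d) := by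
  have e0 := hpq 0
  have e1 := hpq 1
  constructor
  · rintro hp hq hr
    simp only [mem_rect2] at hp hq hr ⊢
    exact ⟨by linarith, by linarith, by linarith, by linarith⟩
  · rintro hp hr
    simp only [mem_rect2] at hp hr ⊢
    exact ⟨by linarith, by linarith, by linarith, by linarith⟩

lemma Wf_cond (p q : Fin 2 → ℝ) (hpq : p ≤ q) (i j : Fin 3) :
    Wf k i j = 0 ∨
      ((p ∈ II i → q ∈ II i → (fun l => q l + 1) ∈ JJ j → (fun l => p l + 1) ∈ JJ j) ∧
       (p ∈ II i → (fun l => q l + 1) ∈ JJ j → q ∈ II i)) := by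
  rcases fin3_cases i with rfl | rfl | rfl <;> rcases fin3_cases j with rfl | rfl | rfl <;>
    simp only [II, JJ, Wf, Matrix.cons_val_zero, Matrix.cons_val_one, Matrix.head_cons,
      Matrix.cons_val_two, Matrix.tail_cons] <;>
    first
      | exact Or.inl rfl
      | exact Or.inl trivial
      | exact Or.inr (rect_LU (by norm_num) (by norm_num) (by norm_num) (by norm_num) p q hpq)

lemma Wg_cond (p q : Fin 2 → ℝ) (hpq : p ≤ q) (j i : Fin 3) :
    Wg k j i = 0 ∨
      ((p ∈ JJ j → q ∈ JJ j → (fun l => q l + 1) ∈ II i → (fun l => p l + 1) ∈ II i) ∧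
       (p ∈ JJ j → (fun l => q l + 1) ∈ II i → q ∈ JJ j)) := by
  rcases fin3_cases j with rfl | rfl | rfl <;> rcases fin3_cases i with rfl | rfl | rfl <;>
    simp only [II, JJ, Wg, Matrix.cons_val_zero, Matrix.cons_val_one, Matrix.head_cons,
      Matrix.cons_val_two, Matrix.tail_cons] <;>
    first
      | exact Or.inl rfl
      | exact Or.inl trivial
      | exact Or.inr (rect_LU (by norm_num) (by norm_num) (by norm_num) (by norm_num) p q hpq)


lemma scal_fg (p : Fin 2 → ℝ) : ∀ x y : Fin 3, p ∈ II x → (fun l => p l + 1 + 1) ∈ II y →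
    (∑ m, if (fun l => p l + 1) ∈ JJ m then Wf k x m * Wg k m y else 0) =
      if x = y then 1 else 0 := by
  intro x y hp hp2
  rcases fin3_cases x with rfl | rfl | rfl
  · rcases fin3_cases y with rfl | rfl | rfl
    · simp only [II, mem_rect2, Matrix.cons_val_zero, Matrix.cons_val_one, Matrix.head_cons,
      Matrix.cons_val_two, Matrix.tail_cons] at hp hp2
      obtain ⟨a1, a2, a3, a4⟩ := hp
      obtain ⟨b1, b2, b3, b4⟩ := hp2
      have m0 : (fun l => p l + 1) ∈ rect2 1 11 0 10 := by
        simp only [mem_rect2]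
        exact ⟨by linarith, by linarith, by linarith, by linarith⟩
      have m1 : (fun l => p l + 1) ∈ rect2 1 9 0 12 := by
        simp only [mem_rect2]
        exact ⟨by linarith, by linarith, by linarith, by linarith⟩
      have m2 : (fun l => p l + 1) ∈ rect2 (-1) 11 2 10 := by
        simp only [mem_rect2]
        exact ⟨by linarith, by linarith, by linarith, by linarith⟩
      rw [Fin.sum_univ_three]
      simp only [JJ, Wf, Wg, Matrix.cons_val_zero, Matrix.cons_val_one, Matrix.head_cons,
      Matrix.cons_val_two, Matrix.tail_cons]
      simp only [m0, m1, m2, if_true]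
      norm_num
    · simp only [II, mem_rect2, Matrix.cons_val_zero, Matrix.cons_val_one, Matrix.head_cons,
      Matrix.cons_val_two, Matrix.tail_cons] at hp hp2
      obtain ⟨a1, a2, a3, a4⟩ := hp
      obtain ⟨b1, b2, b3, b4⟩ := hp2
      have m0 : (fun l => p l + 1) ∈ rect2 1 11 0 10 := by
        simp only [mem_rect2]
        exact ⟨by linarith, by linarith, by linarith, by linarith⟩
      have m2 : (fun l => p l + 1) ∈ rect2 (-1) 11 2 10 := by
        simp only [mem_rect2]
        exact ⟨by linarith, by linarith, by linarith, by linarith⟩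
      rw [Fin.sum_univ_three]
      simp only [JJ, Wf, Wg, Matrix.cons_val_zero, Matrix.cons_val_one, Matrix.head_cons,
      Matrix.cons_val_two, Matrix.tail_cons]
      simp only [m0, m2, if_true]
      rw [if_neg (show ¬((0:Fin 3) = 1) by decide)]
      norm_num
    · simp only [II, mem_rect2, Matrix.cons_val_zero, Matrix.cons_val_one, Matrix.head_cons,
      Matrix.cons_val_two, Matrix.tail_cons] at hp hp2
      obtain ⟨a1, a2, a3, a4⟩ := hp
      obtain ⟨b1, b2, b3, b4⟩ := hp2
      have m0 : (fun l => p l + 1) ∈ rect2 1 11 0 10 := by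
        simp only [mem_rect2]
        exact ⟨by linarith, by linarith, by linarith, by linarith⟩
      have m1 : (fun l => p l + 1) ∈ rect2 1 9 0 12 := by
        simp only [mem_rect2]
        exact ⟨by linarith, by linarith, by linarith, by linarith⟩
      rw [Fin.sum_univ_three]
      simp only [JJ, Wf, Wg, Matrix.cons_val_zero, Matrix.cons_val_one, Matrix.head_cons,
      Matrix.cons_val_two, Matrix.tail_cons]
      simp only [m0, m1, if_true]
      rw [if_neg (show ¬((0:Fin 3) = 2) by decide)]
      norm_num
  · rcases fin3_cases y with rfl | rfl | rfl
    · simp only [II, mem_rect2, Matrix.cons_val_zero, Matrix.cons_val_one, Matrix.head_cons,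
      Matrix.cons_val_two, Matrix.tail_cons] at hp hp2
      obtain ⟨a1, a2, a3, a4⟩ := hp
      obtain ⟨b1, b2, b3, b4⟩ := hp2
      have m0 : (fun l => p l + 1) ∈ rect2 1 11 0 10 := by
        simp only [mem_rect2]
        exact ⟨by linarith, by linarith, by linarith, by linarith⟩
      have m1 : (fun l => p l + 1) ∈ rect2 1 9 0 12 := by
        simp only [mem_rect2]
        exact ⟨by linarith, by linarith, by linarith, by linarith⟩
      rw [Fin.sum_univ_three]
      simp only [JJ, Wf, Wg, Matrix.cons_val_zero, Matrix.cons_val_one, Matrix.head_cons,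
      Matrix.cons_val_two, Matrix.tail_cons]
      simp only [m0, m1, if_true]
      rw [if_neg (show ¬((1:Fin 3) = 0) by decide)]
      norm_num
    · simp only [II, mem_rect2, Matrix.cons_val_zero, Matrix.cons_val_one, Matrix.head_cons,
      Matrix.cons_val_two, Matrix.tail_cons] at hp hp2
      obtain ⟨a1, a2, a3, a4⟩ := hp
      obtain ⟨b1, b2, b3, b4⟩ := hp2
      have m0 : (fun l => p l + 1) ∈ rect2 1 11 0 10 := by
        simp only [mem_rect2]
        exact ⟨by linarith, by linarith, by linarith, by linarith⟩
      rw [Fin.sum_univ_three]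
      simp only [JJ, Wf, Wg, Matrix.cons_val_zero, Matrix.cons_val_one, Matrix.head_cons,
      Matrix.cons_val_two, Matrix.tail_cons]
      simp only [m0, if_true]
      norm_num
    · simp only [II, mem_rect2, Matrix.cons_val_zero, Matrix.cons_val_one, Matrix.head_cons,
      Matrix.cons_val_two, Matrix.tail_cons] at hp hp2
      obtain ⟨a1, a2, a3, a4⟩ := hp
      obtain ⟨b1, b2, b3, b4⟩ := hp2
      have m0 : (fun l => p l + 1) ∈ rect2 1 11 0 10 := by
        simp only [mem_rect2]
        exact ⟨by linarith, by linarith, by linarith, by linarith⟩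
      have m1 : (fun l => p l + 1) ∈ rect2 1 9 0 12 := by
        simp only [mem_rect2]
        exact ⟨by linarith, by linarith, by linarith, by linarith⟩
      rw [Fin.sum_univ_three]
      simp only [JJ, Wf, Wg, Matrix.cons_val_zero, Matrix.cons_val_one, Matrix.head_cons,
      Matrix.cons_val_two, Matrix.tail_cons]
      simp only [m0, m1, if_true]
      rw [if_neg (show ¬((1:Fin 3) = 2) by decide)]
      norm_num
  · rcases fin3_cases y with rfl | rfl | rfl
    · simp only [II, mem_rect2, Matrix.cons_val_zero, Matrix.cons_val_one, Matrix.head_cons,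
      Matrix.cons_val_two, Matrix.tail_cons] at hp hp2
      obtain ⟨a1, a2, a3, a4⟩ := hp
      obtain ⟨b1, b2, b3, b4⟩ := hp2
      have m0 : (fun l => p l + 1) ∈ rect2 1 11 0 10 := by
        simp only [mem_rect2]
        exact ⟨by linarith, by linarith, by linarith, by linarith⟩
      have m2 : (fun l => p l + 1) ∈ rect2 (-1) 11 2 10 := by
        simp only [mem_rect2]
        exact ⟨by linarith, by linarith, by linarith, by linarith⟩
      rw [Fin.sum_univ_three]
      simp only [JJ, Wf, Wg, Matrix.cons_val_zero, Matrix.cons_val_one, Matrix.head_cons,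
      Matrix.cons_val_two, Matrix.tail_cons]
      simp only [m0, m2, if_true]
      rw [if_neg (show ¬((2:Fin 3) = 0) by decide)]
      norm_num
    · simp only [II, mem_rect2, Matrix.cons_val_zero, Matrix.cons_val_one, Matrix.head_cons,
      Matrix.cons_val_two, Matrix.tail_cons] at hp hp2
      obtain ⟨a1, a2, a3, a4⟩ := hp
      obtain ⟨b1, b2, b3, b4⟩ := hp2
      have m0 : (fun l => p l + 1) ∈ rect2 1 11 0 10 := by
        simp only [mem_rect2]
        exact ⟨by linarith, by linarith, by linarith, by linarith⟩
      have m2 : (fun l => p l + 1) ∈ rect2 (-1) 11 2 10 := by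
        simp only [mem_rect2]
        exact ⟨by linarith, by linarith, by linarith, by linarith⟩
      rw [Fin.sum_univ_three]
      simp only [JJ, Wf, Wg, Matrix.cons_val_zero, Matrix.cons_val_one, Matrix.head_cons,
      Matrix.cons_val_two, Matrix.tail_cons]
      simp only [m0, m2, if_true]
      rw [if_neg (show ¬((2:Fin 3) = 1) by decide)]
      norm_num
    · simp only [II, mem_rect2, Matrix.cons_val_zero, Matrix.cons_val_one, Matrix.head_cons,
      Matrix.cons_val_two, Matrix.tail_cons] at hp hp2
      obtain ⟨a1, a2, a3, a4⟩ := hp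
      obtain ⟨b1, b2, b3, b4⟩ := hp2
      have m0 : (fun l => p l + 1) ∈ rect2 1 11 0 10 := by
        simp only [mem_rect2]
        exact ⟨by linarith, by linarith, by linarith, by linarith⟩
      rw [Fin.sum_univ_three]
      simp only [JJ, Wf, Wg, Matrix.cons_val_zero, Matrix.cons_val_one, Matrix.head_cons,
      Matrix.cons_val_two, Matrix.tail_cons]
      simp only [m0, if_true]
      norm_num


lemma scal_gf (p : Fin 2 → ℝ) : ∀ x y : Fin 3, p ∈ JJ x → (fun l => p l + 1 + 1) ∈ JJ y →
    (∑ m, if (fun l => p l + 1) ∈ II m then Wg k x m * Wf k m y else 0) =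
      if x = y then 1 else 0 := by
  intro x y hp hp2
  rcases fin3_cases x with rfl | rfl | rfl
  · rcases fin3_cases y with rfl | rfl | rfl
    · simp only [JJ, mem_rect2, Matrix.cons_val_zero, Matrix.cons_val_one, Matrix.head_cons,
      Matrix.cons_val_two, Matrix.tail_cons] at hp hp2
      obtain ⟨a1, a2, a3, a4⟩ := hp
      obtain ⟨b1, b2, b3, b4⟩ := hp2
      have m0 : (fun l => p l + 1) ∈ rect2 0 10 1 11 := by
        simp only [mem_rect2]
        exact ⟨by linarith, by linarith, by linarith, by linarith⟩
      have m1 : (fun l => p l + 1) ∈ rect2 0 12 (-1) 11 := by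
        simp only [mem_rect2]
        exact ⟨by linarith, by linarith, by linarith, by linarith⟩
      have m2 : (fun l => p l + 1) ∈ rect2 2 10 1 9 := by
        simp only [mem_rect2]
        exact ⟨by linarith, by linarith, by linarith, by linarith⟩
      rw [Fin.sum_univ_three]
      simp only [II, Wg, Wf, Matrix.cons_val_zero, Matrix.cons_val_one, Matrix.head_cons,
      Matrix.cons_val_two, Matrix.tail_cons]
      simp only [m0, m1, m2, if_true]
      norm_num
    · simp only [JJ, mem_rect2, Matrix.cons_val_zero, Matrix.cons_val_one, Matrix.head_cons,
      Matrix.cons_val_two, Matrix.tail_cons] at hp hp2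
      obtain ⟨a1, a2, a3, a4⟩ := hp
      obtain ⟨b1, b2, b3, b4⟩ := hp2
      have m0 : (fun l => p l + 1) ∈ rect2 0 10 1 11 := by
        simp only [mem_rect2]
        exact ⟨by linarith, by linarith, by linarith, by linarith⟩
      have m1 : (fun l => p l + 1) ∈ rect2 0 12 (-1) 11 := by
        simp only [mem_rect2]
        exact ⟨by linarith, by linarith, by linarith, by linarith⟩
      rw [Fin.sum_univ_three]
      simp only [II, Wg, Wf, Matrix.cons_val_zero, Matrix.cons_val_one, Matrix.head_cons,
      Matrix.cons_val_two, Matrix.tail_cons]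
      simp only [m0, m1, if_true]
      rw [if_neg (show ¬((0:Fin 3) = 1) by decide)]
      norm_num
    · simp only [JJ, mem_rect2, Matrix.cons_val_zero, Matrix.cons_val_one, Matrix.head_cons,
      Matrix.cons_val_two, Matrix.tail_cons] at hp hp2
      obtain ⟨a1, a2, a3, a4⟩ := hp
      obtain ⟨b1, b2, b3, b4⟩ := hp2
      have m0 : (fun l => p l + 1) ∈ rect2 0 10 1 11 := by
        simp only [mem_rect2]
        exact ⟨by linarith, by linarith, by linarith, by linarith⟩
      have m2 : (fun l => p l + 1) ∈ rect2 2 10 1 9 := by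
        simp only [mem_rect2]
        exact ⟨by linarith, by linarith, by linarith, by linarith⟩
      rw [Fin.sum_univ_three]
      simp only [II, Wg, Wf, Matrix.cons_val_zero, Matrix.cons_val_one, Matrix.head_cons,
      Matrix.cons_val_two, Matrix.tail_cons]
      simp only [m0, m2, if_true]
      rw [if_neg (show ¬((0:Fin 3) = 2) by decide)]
      norm_num
  · rcases fin3_cases y with rfl | rfl | rfl
    · simp only [JJ, mem_rect2, Matrix.cons_val_zero, Matrix.cons_val_one, Matrix.head_cons,
      Matrix.cons_val_two, Matrix.tail_cons] at hp hp2
      obtain ⟨a1, a2, a3, a4⟩ := hp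
      obtain ⟨b1, b2, b3, b4⟩ := hp2
      have m0 : (fun l => p l + 1) ∈ rect2 0 10 1 11 := by
        simp only [mem_rect2]
        exact ⟨by linarith, by linarith, by linarith, by linarith⟩
      have m2 : (fun l => p l + 1) ∈ rect2 2 10 1 9 := by
        simp only [mem_rect2]
        exact ⟨by linarith, by linarith, by linarith, by linarith⟩
      rw [Fin.sum_univ_three]
      simp only [II, Wg, Wf, Matrix.cons_val_zero, Matrix.cons_val_one, Matrix.head_cons,
      Matrix.cons_val_two, Matrix.tail_cons]
      simp only [m0, m2, if_true]
      rw [if_neg (show ¬((1:Fin 3) = 0) by decide)]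
      norm_num
    · simp only [JJ, mem_rect2, Matrix.cons_val_zero, Matrix.cons_val_one, Matrix.head_cons,
      Matrix.cons_val_two, Matrix.tail_cons] at hp hp2
      obtain ⟨a1, a2, a3, a4⟩ := hp
      obtain ⟨b1, b2, b3, b4⟩ := hp2
      have m0 : (fun l => p l + 1) ∈ rect2 0 10 1 11 := by
        simp only [mem_rect2]
        exact ⟨by linarith, by linarith, by linarith, by linarith⟩
      rw [Fin.sum_univ_three]
      simp only [II, Wg, Wf, Matrix.cons_val_zero, Matrix.cons_val_one, Matrix.head_cons,
      Matrix.cons_val_two, Matrix.tail_cons]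
      simp only [m0, if_true]
      norm_num
    · simp only [JJ, mem_rect2, Matrix.cons_val_zero, Matrix.cons_val_one, Matrix.head_cons,
      Matrix.cons_val_two, Matrix.tail_cons] at hp hp2
      obtain ⟨a1, a2, a3, a4⟩ := hp
      obtain ⟨b1, b2, b3, b4⟩ := hp2
      have m0 : (fun l => p l + 1) ∈ rect2 0 10 1 11 := by
        simp only [mem_rect2]
        exact ⟨by linarith, by linarith, by linarith, by linarith⟩
      have m2 : (fun l => p l + 1) ∈ rect2 2 10 1 9 := by
        simp only [mem_rect2]
        exact ⟨by linarith, by linarith, by linarith, by linarith⟩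
      rw [Fin.sum_univ_three]
      simp only [II, Wg, Wf, Matrix.cons_val_zero, Matrix.cons_val_one, Matrix.head_cons,
      Matrix.cons_val_two, Matrix.tail_cons]
      simp only [m0, m2, if_true]
      rw [if_neg (show ¬((1:Fin 3) = 2) by decide)]
      norm_num
  · rcases fin3_cases y with rfl | rfl | rfl
    · simp only [JJ, mem_rect2, Matrix.cons_val_zero, Matrix.cons_val_one, Matrix.head_cons,
      Matrix.cons_val_two, Matrix.tail_cons] at hp hp2
      obtain ⟨a1, a2, a3, a4⟩ := hp
      obtain ⟨b1, b2, b3, b4⟩ := hp2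
      have m0 : (fun l => p l + 1) ∈ rect2 0 10 1 11 := by
        simp only [mem_rect2]
        exact ⟨by linarith, by linarith, by linarith, by linarith⟩
      have m1 : (fun l => p l + 1) ∈ rect2 0 12 (-1) 11 := by
        simp only [mem_rect2]
        exact ⟨by linarith, by linarith, by linarith, by linarith⟩
      rw [Fin.sum_univ_three]
      simp only [II, Wg, Wf, Matrix.cons_val_zero, Matrix.cons_val_one, Matrix.head_cons,
      Matrix.cons_val_two, Matrix.tail_cons]
      simp only [m0, m1, if_true]
      rw [if_neg (show ¬((2:Fin 3) = 0) by decide)]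
      norm_num
    · simp only [JJ, mem_rect2, Matrix.cons_val_zero, Matrix.cons_val_one, Matrix.head_cons,
      Matrix.cons_val_two, Matrix.tail_cons] at hp hp2
      obtain ⟨a1, a2, a3, a4⟩ := hp
      obtain ⟨b1, b2, b3, b4⟩ := hp2
      have m0 : (fun l => p l + 1) ∈ rect2 0 10 1 11 := by
        simp only [mem_rect2]
        exact ⟨by linarith, by linarith, by linarith, by linarith⟩
      have m1 : (fun l => p l + 1) ∈ rect2 0 12 (-1) 11 := by
        simp only [mem_rect2]
        exact ⟨by linarith, by linarith, by linarith, by linarith⟩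
      rw [Fin.sum_univ_three]
      simp only [II, Wg, Wf, Matrix.cons_val_zero, Matrix.cons_val_one, Matrix.head_cons,
      Matrix.cons_val_two, Matrix.tail_cons]
      simp only [m0, m1, if_true]
      rw [if_neg (show ¬((2:Fin 3) = 1) by decide)]
      norm_num
    · simp only [JJ, mem_rect2, Matrix.cons_val_zero, Matrix.cons_val_one, Matrix.head_cons,
      Matrix.cons_val_two, Matrix.tail_cons] at hp hp2
      obtain ⟨a1, a2, a3, a4⟩ := hp
      obtain ⟨b1, b2, b3, b4⟩ := hp2
      have m0 : (fun l => p l + 1) ∈ rect2 0 10 1 11 := by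
        simp only [mem_rect2]
        exact ⟨by linarith, by linarith, by linarith, by linarith⟩
      rw [Fin.sum_univ_three]
      simp only [II, Wg, Wf, Matrix.cons_val_zero, Matrix.cons_val_one, Matrix.head_cons,
      Matrix.cons_val_two, Matrix.tail_cons]
      simp only [m0, if_true]
      norm_num

/-- The interleaving morphism `f : M → N(1)`. -/
def FF : B16.module k ⟶ transl 2 1 ⋙ N16.module k where
  app p := ModuleCat.ofHom (matApp k (Wf k) II JJ 1 p)
  naturality := by
    intro p q h
    have e1 : (DFinsupp.mapRange.linearMap fun i =>
        (((intervalModule k (B16.I i) (B16.conv i)).map h).hom :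
          ↥(objSub k (II i) p) →ₗ[k] ↥(objSub k (II i) q))) =
        DFinsupp.mapRange.linearMap fun i => jmap k 1 (II i) (II i) p q := by
      congr 1
      funext i
      exact congrArg ModuleCat.Hom.hom (intervalModule_map_eq k (B16.I i) (B16.conv i) h)
    have e2 : (DFinsupp.mapRange.linearMap fun j =>
        (((intervalModule k (N16.I j) (N16.conv j)).map ((transl 2 1).map h)).hom :
          ↥(objSub k (JJ j) (fun l => p l + 1)) →ₗ[k] ↥(objSub k (JJ j) (fun l => q l + 1)))) =
        DFinsupp.mapRange.linearMap fun j =>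
          jmap k 1 (JJ j) (JJ j) (fun l => p l + 1) (fun l => q l + 1) := by
      congr 1
      funext j
      exact congrArg ModuleCat.Hom.hom (intervalModule_map_eq k (N16.I j) (N16.conv j) ((transl 2 1).map h))
    apply ModuleCat.hom_ext
    show (matApp k (Wf k) II JJ 1 q).comp
        (DFinsupp.mapRange.linearMap fun i =>
          (((intervalModule k (B16.I i) (B16.conv i)).map h).hom :
            ↥(objSub k (II i) p) →ₗ[k] ↥(objSub k (II i) q))) =
      (DFinsupp.mapRange.linearMap fun j =>
          (((intervalModule k (N16.I j) (N16.conv j)).map ((transl 2 1).map h)).hom :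
            ↥(objSub k (JJ j) (fun l => p l + 1)) →ₗ[k]
              ↥(objSub k (JJ j) (fun l => q l + 1)))).comp
        (matApp k (Wf k) II JJ 1 p)
    have := matApp_nat k (Wf k) II JJ 1 p q (Wf_cond k p q (leOfHom h))
    rw [← e1, ← e2] at this
    exact this

/-- The interleaving morphism `g : N → M(1)`. -/
def GG : N16.module k ⟶ transl 2 1 ⋙ B16.module k where
  app p := ModuleCat.ofHom (matApp k (Wg k) JJ II 1 p)
  naturality := by
    intro p q h
    have e1 : (DFinsupp.mapRange.linearMap fun j =>
        (((intervalModule k (N16.I j) (N16.conv j)).map h).hom :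
          ↥(objSub k (JJ j) p) →ₗ[k] ↥(objSub k (JJ j) q))) =
        DFinsupp.mapRange.linearMap fun j => jmap k 1 (JJ j) (JJ j) p q := by
      congr 1
      funext j
      exact congrArg ModuleCat.Hom.hom (intervalModule_map_eq k (N16.I j) (N16.conv j) h)
    have e2 : (DFinsupp.mapRange.linearMap fun i =>
        (((intervalModule k (B16.I i) (B16.conv i)).map ((transl 2 1).map h)).hom :
          ↥(objSub k (II i) (fun l => p l + 1)) →ₗ[k] ↥(objSub k (II i) (fun l => q l + 1)))) =
        DFinsupp.mapRange.linearMap fun i =>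
          jmap k 1 (II i) (II i) (fun l => p l + 1) (fun l => q l + 1) := by
      congr 1
      funext i
      exact congrArg ModuleCat.Hom.hom (intervalModule_map_eq k (B16.I i) (B16.conv i) ((transl 2 1).map h))
    apply ModuleCat.hom_ext
    show (matApp k (Wg k) JJ II 1 q).comp
        (DFinsupp.mapRange.linearMap fun j =>
          (((intervalModule k (N16.I j) (N16.conv j)).map h).hom :
            ↥(objSub k (JJ j) p) →ₗ[k] ↥(objSub k (JJ j) q))) =
      (DFinsupp.mapRange.linearMap fun i =>
          (((intervalModule k (B16.I i) (B16.conv i)).map ((transl 2 1).map h)).hom :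
            ↥(objSub k (II i) (fun l => p l + 1)) →ₗ[k]
              ↥(objSub k (II i) (fun l => q l + 1)))).comp
        (matApp k (Wg k) JJ II 1 p)
    have := matApp_nat k (Wg k) JJ II 1 p q (Wg_cond k p q (leOfHom h))
    rw [← e1, ← e2] at this
    exact this

lemma main_interleaved : Interleaved k 1 (B16.module k) (N16.module k) := by
  refine ⟨zero_le_one, FF k, GG k, ?_, ?_⟩
  · intro p
    have e1 : (DFinsupp.mapRange.linearMap fun i =>
        (((intervalModule k (B16.I i) (B16.conv i)).map
          (homOfLE (show p ≤ fun i => p i + 1 + 1 from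
            fun i => by show p i ≤ p i + 1 + 1; linarith))).hom :
          ↥(objSub k (II i) p) →ₗ[k] ↥(objSub k (II i) (fun i => p i + 1 + 1)))) =
        DFinsupp.mapRange.linearMap fun i =>
          jmap k 1 (II i) (II i) p (fun l => p l + 1 + 1) := by
      congr 1
      funext i
      exact congrArg ModuleCat.Hom.hom (intervalModule_map_eq k (B16.I i) (B16.conv i) _)
    apply ModuleCat.hom_ext
    show (matApp k (Wg k) JJ II 1 (fun i => p i + 1)).comp (matApp k (Wf k) II JJ 1 p) =
      DFinsupp.mapRange.linearMap fun i =>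
        (((intervalModule k (B16.I i) (B16.conv i)).map
          (homOfLE (show p ≤ fun i => p i + 1 + 1 from
            fun i => by show p i ≤ p i + 1 + 1; linarith))).hom :
          ↥(objSub k (II i) p) →ₗ[k] ↥(objSub k (II i) (fun i => p i + 1 + 1)))
    rw [e1]
    exact matApp_comp k (Wf k) (Wg k) II JJ 1 p (scal_fg k p)
  · intro p
    have e1 : (DFinsupp.mapRange.linearMap fun j =>
        (((intervalModule k (N16.I j) (N16.conv j)).map
          (homOfLE (show p ≤ fun i => p i + 1 + 1 from
            fun i => by show p i ≤ p i + 1 + 1; linarith))).hom :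
          ↥(objSub k (JJ j) p) →ₗ[k] ↥(objSub k (JJ j) (fun i => p i + 1 + 1)))) =
        DFinsupp.mapRange.linearMap fun j =>
          jmap k 1 (JJ j) (JJ j) p (fun l => p l + 1 + 1) := by
      congr 1
      funext j
      exact congrArg ModuleCat.Hom.hom (intervalModule_map_eq k (N16.I j) (N16.conv j) _)
    apply ModuleCat.hom_ext
    show (matApp k (Wf k) II JJ 1 (fun i => p i + 1)).comp (matApp k (Wg k) JJ II 1 p) =
      DFinsupp.mapRange.linearMap fun j =>
        (((intervalModule k (N16.I j) (N16.conv j)).map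
          (homOfLE (show p ≤ fun i => p i + 1 + 1 from
            fun i => by show p i ≤ p i + 1 + 1; linarith))).hom :
          ↥(objSub k (JJ j) p) →ₗ[k] ↥(objSub k (JJ j) (fun i => p i + 1 + 1)))
    rw [e1]
    exact matApp_comp k (Wg k) (Wf k) JJ II 1 p (scal_gf k p)

lemma not_trivial {a b c d ε : ℝ} (hε0 : 0 ≤ ε) (hε3 : ε < 3) (hab : 8 ≤ b - a)
    (hcd : 8 ≤ d - c) : ¬ SetTrivial (2 * ε) (rect2 a b c d) := by
  intro h
  refine h ⟨![(a+b)/2 - ε, (c+d)/2 - ε], ?_, ?_⟩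
  · simp only [mem_rect2, Matrix.cons_val_zero, Matrix.cons_val_one, Matrix.head_cons]
    exact ⟨by linarith, by linarith, by linarith, by linarith⟩
  · simp only [mem_rect2, Matrix.cons_val_zero, Matrix.cons_val_one, Matrix.head_cons]
    exact ⟨by linarith, by linarith, by linarith, by linarith⟩

lemma NI_22 {ε : ℝ} (hε3 : ε < 3) {hc1 : IsConvex (rect2 0 12 (-1) 11)}
    {hc2 : IsConvex (rect2 1 9 0 12)} :
    ¬ Interleaved k ε (intervalModule k (rect2 0 12 (-1) 11) hc1)
      (intervalModule k (rect2 1 9 0 12) hc2) := by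
  intro h
  have hε0 : 0 ≤ ε := h.choose
  refine not_interleaved_interval k ![(21 - 3*ε)/2, 2] ?_ ?_ ?_ h
  · simp only [mem_rect2, Matrix.cons_val_zero, Matrix.cons_val_one, Matrix.head_cons]
    exact ⟨by linarith, by linarith, by linarith, by linarith⟩
  · simp only [mem_rect2, Matrix.cons_val_zero, Matrix.cons_val_one, Matrix.head_cons]
    exact ⟨by linarith, by linarith, by linarith, by linarith⟩
  · intro hc
    simp only [mem_rect2, Matrix.cons_val_zero, Matrix.cons_val_one, Matrix.head_cons] at hc
    obtain ⟨-, h2, -, -⟩ := hc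
    linarith

lemma NI_23 {ε : ℝ} (hε3 : ε < 3) {hc1 : IsConvex (rect2 0 12 (-1) 11)}
    {hc2 : IsConvex (rect2 (-1) 11 2 10)} :
    ¬ Interleaved k ε (intervalModule k (rect2 0 12 (-1) 11) hc1)
      (intervalModule k (rect2 (-1) 11 2 10) hc2) := by
  intro h
  have hε0 : 0 ≤ ε := h.choose
  refine not_interleaved_interval k ![2, (1 - ε)/2] ?_ ?_ ?_ h
  · simp only [mem_rect2, Matrix.cons_val_zero, Matrix.cons_val_one, Matrix.head_cons]
    exact ⟨by linarith, by linarith, by linarith, by linarith⟩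
  · simp only [mem_rect2, Matrix.cons_val_zero, Matrix.cons_val_one, Matrix.head_cons]
    exact ⟨by linarith, by linarith, by linarith, by linarith⟩
  · intro hc
    simp only [mem_rect2, Matrix.cons_val_zero, Matrix.cons_val_one, Matrix.head_cons] at hc
    obtain ⟨-, -, h3, -⟩ := hc
    linarith

lemma NI_32 {ε : ℝ} (hε3 : ε < 3) {hc1 : IsConvex (rect2 1 9 0 12)}
    {hc2 : IsConvex (rect2 2 10 1 9)} :
    ¬ Interleaved k ε (intervalModule k (rect2 1 9 0 12) hc1)
      (intervalModule k (rect2 2 10 1 9) hc2) := by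
  intro h
  have hε0 : 0 ≤ ε := h.choose
  refine not_interleaved_interval k ![2, (21 - 3*ε)/2] ?_ ?_ ?_ h
  · simp only [mem_rect2, Matrix.cons_val_zero, Matrix.cons_val_one, Matrix.head_cons]
    exact ⟨by linarith, by linarith, by linarith, by linarith⟩
  · simp only [mem_rect2, Matrix.cons_val_zero, Matrix.cons_val_one, Matrix.head_cons]
    exact ⟨by linarith, by linarith, by linarith, by linarith⟩
  · intro hc
    simp only [mem_rect2, Matrix.cons_val_zero, Matrix.cons_val_one, Matrix.head_cons] at hc
    obtain ⟨-, -, -, h4⟩ := hc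
    linarith

lemma NI_33 {ε : ℝ} (hε3 : ε < 3) {hc1 : IsConvex (rect2 (-1) 11 2 10)}
    {hc2 : IsConvex (rect2 2 10 1 9)} :
    ¬ Interleaved k ε (intervalModule k (rect2 (-1) 11 2 10) hc1)
      (intervalModule k (rect2 2 10 1 9) hc2) := by
  intro h
  have hε0 : 0 ≤ ε := h.choose
  refine not_interleaved_interval k ![(1 - ε)/2, 4] ?_ ?_ ?_ h
  · simp only [mem_rect2, Matrix.cons_val_zero, Matrix.cons_val_one, Matrix.head_cons]
    exact ⟨by linarith, by linarith, by linarith, by linarith⟩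
  · simp only [mem_rect2, Matrix.cons_val_zero, Matrix.cons_val_one, Matrix.head_cons]
    exact ⟨by linarith, by linarith, by linarith, by linarith⟩
  · intro hc
    simp only [mem_rect2, Matrix.cons_val_zero, Matrix.cons_val_one, Matrix.head_cons] at hc
    obtain ⟨h1, -, -, -⟩ := hc
    linarith

lemma no_matching {ε : ℝ} (hε3 : ε < 3) : ¬ Matched k ε B16 N16 := by
  rintro ⟨hε0, A, A', e, hA, hA', hint⟩
  have hAll : ∀ i : Fin 3, i ∈ A := by
    intro i
    by_contra hi
    have ht := hA i hi
    rcases fin3_cases i with rfl | rfl | rfl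
    · exact not_trivial hε0 hε3 (by norm_num) (by norm_num) ht
    · exact not_trivial hε0 hε3 (by norm_num) (by norm_num) ht
    · exact not_trivial hε0 hε3 (by norm_num) (by norm_num) ht
  have hI : ∀ i : Fin 3, Interleaved k ε
      (intervalModule k (B16.I i) (B16.conv i))
      (intervalModule k (N16.I (e ⟨i, hAll i⟩).val)
        (N16.conv (e ⟨i, hAll i⟩).val)) := fun i => hint ⟨i, hAll i⟩
  have hinj : ∀ a b : Fin 3,
      (e ⟨a, hAll a⟩).val = (e ⟨b, hAll b⟩).val → a = b := by
    intro a b hab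
    have := e.injective (Subtype.ext hab)
    exact congrArg Subtype.val this
  have h1 := hI 1
  have h2 := hI 2
  rcases fin3_cases (e ⟨(1 : Fin 3), hAll 1⟩).val with ha | ha | ha
  · rcases fin3_cases (e ⟨(2 : Fin 3), hAll 2⟩).val with hb | hb | hb
    · exact absurd (hinj 1 2 (ha.trans hb.symm)) (by decide)
    · rw [hb] at h2
      exact NI_32 k hε3 (interleaved_symm k h2)
    · rw [hb] at h2
      exact NI_33 k hε3 (interleaved_symm k h2)
  · rw [ha] at h1
    exact NI_22 k hε3 h1
  · rw [ha] at h1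
    exact NI_23 k hε3 h1

lemma not_interleaved_main {ε : ℝ} (hε1 : ε < 1) :
    ¬ Interleaved k ε (B16.module k) (N16.module k) := by
  rintro ⟨hε0, f, g, hfg, -⟩
  set p : Fin 2 → ℝ := ![10 - ε, 10 + (1-ε)/2 - ε] with hpdef
  have hp : p ∈ B16.I (1 : Fin 3) := by
    simp only [hpdef, B16, II, mem_rect2, Matrix.cons_val_zero, Matrix.cons_val_one,
      Matrix.head_cons]
    exact ⟨by linarith, by linarith, by linarith, by linarith⟩
  have hp2 : (fun l => p l + ε + ε) ∈ B16.I (1 : Fin 3) := by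
    simp only [hpdef, B16, II, mem_rect2, Matrix.cons_val_zero, Matrix.cons_val_one,
      Matrix.head_cons]
    exact ⟨by linarith, by linarith, by linarith, by linarith⟩
  have hq : ∀ j : Fin 3, (fun l => p l + ε) ∉ N16.I j := by
    intro j
    rcases fin3_cases j with rfl | rfl | rfl <;>
      · intro hc
        simp only [hpdef, N16, mem_rect2, Matrix.cons_val_zero, Matrix.cons_val_one,
          Matrix.head_cons, Matrix.cons_val_two, Matrix.tail_cons] at hc
        obtain ⟨c1, c2, c3, c4⟩ := hc
        linarith
  set v : ↥(objSub k (B16.I (1 : Fin 3)) p) := ⟨1, by simp [objSub, hp]⟩ with hvdef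
  set x : ⨁ i : Fin 3, ↥(objSub k (B16.I i) p) :=
    DirectSum.lof k (Fin 3) (fun i => ↥(objSub k (B16.I i) p)) 1 v with hxdef
  have hcomp := hfg p
  have h1 : (g.app (fun i => p i + ε)) ((f.app p) x) =
      ((B16.module k).map (homOfLE (show p ≤ fun i => p i + ε + ε from
        fun i => by show p i ≤ p i + ε + ε; linarith))) x := by
    rw [← hcomp]; rfl
  haveI hss : ∀ j : N16.ι, Subsingleton ↥(objSub k (N16.I j) (fun i => p i + ε)) :=
    fun j => objSub_subsingleton k (hq j)
  have h2 : (f.app p) x = 0 := (dsum_subsingleton (M := fun j =>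
    ↥(objSub k (N16.I j) (fun i => p i + ε)))).allEq _ _
  rw [h2] at h1
  erw [map_zero] at h1
  have h3 : ((B16.module k).map (homOfLE (show p ≤ fun i => p i + ε + ε from
      fun i => by show p i ≤ p i + ε + ε; linarith))) x =
      DirectSum.lof k (Fin 3) (fun i => ↥(objSub k (B16.I i) (fun i => p i + ε + ε))) 1
        (jmap k 1 (B16.I (1 : Fin 3)) (B16.I (1 : Fin 3)) p (fun i => p i + ε + ε) v) := by
    have e1 : (DFinsupp.mapRange.linearMap fun i =>
        (((intervalModule k (B16.I i) (B16.conv i)).map (homOfLE (show p ≤ fun i => p i + ε + ε from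
          fun i => by show p i ≤ p i + ε + ε; linarith))).hom :
          ↥(objSub k (B16.I i) p) →ₗ[k] ↥(objSub k (B16.I i) (fun i => p i + ε + ε)))) =
        DFinsupp.mapRange.linearMap fun i =>
          jmap k 1 (B16.I i) (B16.I i) p (fun i => p i + ε + ε) := by
      congr 1
      funext i
      exact congrArg ModuleCat.Hom.hom (intervalModule_map_eq k (B16.I i) (B16.conv i) _)
    show (DFinsupp.mapRange.linearMap fun i =>
        (((intervalModule k (B16.I i) (B16.conv i)).map (homOfLE (show p ≤ fun i => p i + ε + ε from
          fun i => by show p i ≤ p i + ε + ε; linarith))).hom :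
          ↥(objSub k (B16.I i) p) →ₗ[k] ↥(objSub k (B16.I i) (fun i => p i + ε + ε)))) x = _
    rw [e1, hxdef]
    exact mapRange_lof (ι := Fin 3) k
      (fun i => jmap k 1 (B16.I i) (B16.I i) p (fun i => p i + ε + ε)) (1 : Fin 3) v
  rw [h3] at h1
  have h4 := congrArg
    (fun z : ⨁ i : Fin 3, ↥(objSub k (B16.I i) (fun i => p i + ε + ε)) => z (1 : Fin 3)) h1
  dsimp only at h4
  rw [DirectSum.lof_apply] at h4
  have h40 : ((0 : ⨁ i : Fin 3, ↥(objSub k (B16.I i) (fun i => p i + ε + ε)))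
      (1 : Fin 3)) = 0 := rfl
  replace h4 := h40.symm.trans h4
  have h5 : ((jmap k 1 (B16.I (1 : Fin 3)) (B16.I (1 : Fin 3)) p (fun i => p i + ε + ε) v : _) : k) = 1 := by
    rw [jmap, dif_pos ⟨hp, hp2⟩]
    simp [hvdef]
  rw [← h4] at h5
  simp only [ZeroMemClass.coe_zero] at h5
  exact zero_ne_one h5

lemma B16_pfd : B16.pfd k := by
  intro p
  exact Module.Finite.equiv (DirectSum.linearEquivFunOnFintype k (Fin 3)
    (fun i => ↥(objSub k (B16.I i) p))).symm

lemma N16_pfd : N16.pfd k := by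
  intro p
  exact Module.Finite.equiv (DirectSum.linearEquivFunOnFintype k (Fin 3)
    (fun j => ↥(objSub k (N16.I j) p))).symm

lemma rectRJ (a b c d : ℝ) (h1 : a < b) (h2 : c < d) :
    ∀ j : Fin 2, ((![Set.Ioo a b, Set.Ioo c d] : Fin 2 → Set ℝ) j).Nonempty ∧
      ((![Set.Ioo a b, Set.Ioo c d] : Fin 2 → Set ℝ) j).OrdConnected := by
  intro j
  have hj : j = 0 ∨ j = 1 := by omega
  rcases hj with rfl | rfl
  · exact ⟨Set.nonempty_Ioo.mpr h1, Set.ordConnected_Ioo⟩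
  · exact ⟨Set.nonempty_Ioo.mpr h2, Set.ordConnected_Ioo⟩

lemma B16_rect : IsRectBarcode B16 := by
  intro i
  rcases fin3_cases i with rfl | rfl | rfl
  · exact ⟨![Set.Ioo 0 10, Set.Ioo 1 11], rectRJ 0 10 1 11 (by norm_num) (by norm_num), rfl⟩
  · exact ⟨![Set.Ioo 0 12, Set.Ioo (-1) 11], rectRJ 0 12 (-1) 11 (by norm_num) (by norm_num),
      rfl⟩
  · exact ⟨![Set.Ioo 2 10, Set.Ioo 1 9], rectRJ 2 10 1 9 (by norm_num) (by norm_num), rfl⟩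

lemma N16_rect : IsRectBarcode N16 := by
  intro j
  rcases fin3_cases j with rfl | rfl | rfl
  · exact ⟨![Set.Ioo 1 11, Set.Ioo 0 10], rectRJ 1 11 0 10 (by norm_num) (by norm_num), rfl⟩
  · exact ⟨![Set.Ioo 1 9, Set.Ioo 0 12], rectRJ 1 9 0 12 (by norm_num) (by norm_num), rfl⟩
  · exact ⟨![Set.Ioo (-1) 11, Set.Ioo 2 10], rectRJ (-1) 11 2 10 (by norm_num) (by norm_num),
      rfl⟩

lemma matched_three : Matched k 3 B16 N16 := by
  refine ⟨by norm_num, Set.univ, Set.univ, Equiv.refl _, ?_, ?_, ?_⟩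
  · intro i hi
    exact absurd (Set.mem_univ i) hi
  · intro j hj
    exact absurd (Set.mem_univ j) hj
  · rintro ⟨i, hi⟩
    rcases fin3_cases i with rfl | rfl | rfl
    · exact rect2_interleaved k (by norm_num) (by norm_num) (by norm_num) (by norm_num)
        (by norm_num) (by norm_num) (by norm_num) (by norm_num) (by norm_num)
        (B16.conv (0 : Fin 3)) (N16.conv (0 : Fin 3))
    · exact rect2_interleaved k (by norm_num) (by norm_num) (by norm_num) (by norm_num)
        (by norm_num) (by norm_num) (by norm_num) (by norm_num) (by norm_num)
        (B16.conv (1 : Fin 3)) (N16.conv (1 : Fin 3))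
    · exact rect2_interleaved k (by norm_num) (by norm_num) (by norm_num) (by norm_num)
        (by norm_num) (by norm_num) (by norm_num) (by norm_num) (by norm_num)
        (B16.conv (2 : Fin 3)) (N16.conv (2 : Fin 3))

end Aux

/-- **Example 4.2.** The rectangle decomposable `ℝ²`-modules with barcodes
`B(M) = {(0,10)×(1,11), (0,12)×(−1,11), (2,10)×(1,9)}` and
`B(N) = {(1,11)×(0,10), (1,9)×(0,12), (−1,11)×(2,10)}` are `1`-interleaved, admit no
`ε`-matching for `ε < 3`, and satisfy `d_I(M,N) = 1`, `d_B(M,N) = 3`; hence the bound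
`d_B ≤ (2n−1)·d_I` for rectangle decomposable `ℝⁿ`-modules is tight for `n = 2`. -/
theorem example_dB_eq_three_dI (k : Type) [Field k] :
    B16.pfd k ∧ N16.pfd k ∧ IsRectBarcode B16 ∧ IsRectBarcode N16 ∧
    Interleaved k 1 (B16.module k) (N16.module k) ∧
    (∀ ε : ℝ, ε < 3 → ¬ Matched k ε B16 N16) ∧
    dInt k (B16.module k) (N16.module k) = 1 ∧
    dBot k B16 N16 = 3 := by
  refine ⟨B16_pfd k, N16_pfd k, B16_rect, N16_rect, main_interleaved k,
    fun ε hε => no_matching k hε, ?_, ?_⟩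
  · apply le_antisymm
    · have h1 : dInt k (B16.module k) (N16.module k) ≤ ENNReal.ofReal 1 :=
        (iInf_le _ 1).trans (iInf_le _ (main_interleaved k))
      rwa [ENNReal.ofReal_one] at h1
    · refine le_iInf fun ε => le_iInf fun hI => ?_
      have hε1 : 1 ≤ ε := by
        by_contra hcon
        push_neg at hcon
        exact not_interleaved_main k hcon hI
      calc (1 : ℝ≥0∞) = ENNReal.ofReal 1 := ENNReal.ofReal_one.symm
        _ ≤ ENNReal.ofReal ε := ENNReal.ofReal_le_ofReal hε1
  · apply le_antisymm
    · have h1 : dBot k B16 N16 ≤ ENNReal.ofReal 3 :=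
        (iInf_le _ 3).trans (iInf_le _ (matched_three k))
      rwa [show ENNReal.ofReal 3 = 3 from by rw [ENNReal.ofReal_ofNat]] at h1
    · refine le_iInf fun ε => le_iInf fun hM => ?_
      have hε3 : 3 ≤ ε := by
        by_contra hcon
        push_neg at hcon
        exact no_matching k hcon hM
      calc (3 : ℝ≥0∞) = ENNReal.ofReal 3 := by rw [ENNReal.ofReal_ofNat]
        _ ≤ ENNReal.ofReal ε := ENNReal.ofReal_le_ofReal hε3
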